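/- For Schwartz functions f, g on ℝ^d and skew-symmetric θ, ∫_{ℝ^d} (f ⋆_θ g)(x) dx = ∫_{ℝ^d} f(x) g(x) dx. -/

import Mathlib

open MeasureTheory Matrix

/-- The Moyal product associated to a skew-symmetric matrix θ:
(f ⋆_θ g)(x) = (2π)^{−d} ∫∫ f(x + (θ/2)v) g(x − w) e^{i v·w} dv dw. -/
noncomputable def moyalProd {d : ℕ} (θ : Matrix (Fin d) (Fin d) ℝ)
    (f g : (Fin d → ℝ) → ℂ) : (Fin d → ℝ) → ℂ :=
  fun x => ((2 * Real.pi) ^ d : ℝ)⁻¹ •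
    ∫ v : Fin d → ℝ, ∫ w : Fin d → ℝ,
      f (x + (1 / 2 : ℝ) • θ.mulVec v) * g (x - w)
        * Complex.exp (Complex.I * (∑ i, v i * w i : ℝ))

namespace MoyalAux

open MeasureTheory Complex Real FourierTransform RealInnerProductSpace SchwartzMap

variable {V : Type*} [NormedAddCommGroup V] [InnerProductSpace ℝ V]
  [MeasurableSpace V] [BorelSpace V] [FiniteDimensional ℝ V]

lemma e1 (h : V → ℂ) (v : V) :
    ∫ w : V, h w * Complex.exp (-(Complex.I * (⟪w, v⟫ : ℝ))) = 𝓕 h ((2 * π)⁻¹ • v) := by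
  rw [Real.fourier_eq']
  congr 1
  ext w
  rw [real_inner_smul_right, smul_eq_mul]
  rw [show (-2 * π * ((2 * π)⁻¹ * ⟪w, v⟫)) = -⟪w, v⟫ by field_simp]
  rw [mul_comm]
  congr 1
  push_cast
  ring_nf

lemma e2 (h : V → ℂ) (v : V) :
    ∫ w : V, h w * Complex.exp (Complex.I * (⟪w, v⟫ : ℝ)) = 𝓕⁻ h ((2 * π)⁻¹ • v) := by
  rw [Real.fourierInv_eq']
  congr 1
  ext w
  rw [real_inner_smul_right, smul_eq_mul]
  rw [show (2 * π * ((2 * π)⁻¹ * ⟪w, v⟫)) = ⟪w, v⟫ by field_simp]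
  rw [mul_comm, mul_comm Complex.I]

lemma fourier_schwartz_integrable (g : SchwartzMap V ℂ) : Integrable (𝓕 (⇑g)) := by
  have := (fourierTransformCLM ℂ g).integrable (μ := volume)
  rwa [fourierTransformCLM_apply] at this

lemma fourier_schwartz_continuous (g : SchwartzMap V ℂ) : Continuous (𝓕 (⇑g)) := by
  have := (fourierTransformCLM ℂ g).continuous
  rwa [fourierTransformCLM_apply] at this

lemma stepZ (f g : SchwartzMap V ℂ) :
    ∫ v : V, 𝓕⁻ (⇑f) v * 𝓕 (⇑g) v = ∫ x : V, f x * g x := by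
  have hg1 : Integrable (𝓕 (⇑g)) := fourier_schwartz_integrable g
  have hflip : (-(innerₗ V)).flip = -(innerₗ V) := by
    ext v w
    simp [real_inner_comm]
  have key := VectorFourier.integral_fourierIntegral_smul_eq_flip
    (e := Real.fourierChar) (L := -(innerₗ V)) (μ := volume) (ν := volume)
    Real.continuous_fourierChar (by exact (continuous_inner (𝕜 := ℝ) (E := V)).neg)
    f.integrable hg1
  rw [hflip] at key
  have hinv : 𝓕⁻ (𝓕 (⇑g)) = ⇑g :=
    Continuous.fourierInv_fourier_eq g.continuous g.integrable hg1
  calc ∫ v : V, 𝓕⁻ (⇑f) v * 𝓕 (⇑g) v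
      = ∫ ξ : V, (VectorFourier.fourierIntegral Real.fourierChar volume (-(innerₗ V)) (⇑f) ξ)
          • (𝓕 (⇑g) ξ) := by rfl
    _ = ∫ x : V, (f x) •
          (VectorFourier.fourierIntegral Real.fourierChar volume (-(innerₗ V)) (𝓕 (⇑g)) x) := key
    _ = ∫ x : V, f x * g x := by
          congr 1; ext x
          have : VectorFourier.fourierIntegral Real.fourierChar volume (-(innerₗ V)) (𝓕 (⇑g)) x
              = 𝓕⁻ (𝓕 (⇑g)) x := rfl
          rw [this, hinv, smul_eq_mul]

lemma norm_exp_I_mul (t : ℝ) : ‖Complex.exp (Complex.I * (t : ℂ))‖ = 1 := by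
  rw [mul_comm, Complex.norm_exp_ofReal_mul_I]

theorem core (A : V →L[ℝ] V) (hA : ∀ v : V, ⟪v, A v⟫ = 0) (f g : SchwartzMap V ℂ) :
    ∫ x : V, (((2 * π) ^ (Module.finrank ℝ V) : ℝ)⁻¹ •
      ∫ v : V, ∫ w : V, f (x + A v) * g (x - w) * Complex.exp (Complex.I * (⟪v, w⟫ : ℝ)))
    = ∫ x : V, f x * g x := by
  have twopi_pos : (0:ℝ) < 2 * π := by positivity
  set n := Module.finrank ℝ V with hn
  set G : V → ℂ := fun v => 𝓕 (⇑g) ((2 * π)⁻¹ • v) with hGdef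
  have hG_cont : Continuous G := (fourier_schwartz_continuous g).comp (continuous_const_smul _)
  have hG_int : Integrable G :=
    (fourier_schwartz_integrable g).comp_smul (inv_ne_zero twopi_pos.ne')
  -- Step W : inner w-integral
  have hW : ∀ x v : V, (∫ w : V, f (x + A v) * g (x - w) * Complex.exp (Complex.I * (⟪v, w⟫ : ℝ)))
      = f (x + A v) * (Complex.exp (Complex.I * (⟪v, x⟫ : ℝ)) * G v) := by
    intro x v
    simp_rw [mul_assoc]
    rw [integral_const_mul]
    congr 1
    have hsub := integral_sub_left_eq_self
      (fun w => g (x - w) * Complex.exp (Complex.I * (⟪v, w⟫ : ℝ))) volume x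
    rw [← hsub]
    have : ∀ w : V, g (x - (x - w)) * Complex.exp (Complex.I * (⟪v, x - w⟫ : ℝ))
        = Complex.exp (Complex.I * (⟪v, x⟫ : ℝ))
          * (g w * Complex.exp (-(Complex.I * (⟪w, v⟫ : ℝ)))) := by
      intro w
      rw [sub_sub_cancel, inner_sub_right, real_inner_comm w v]
      rw [show (Complex.I * ((⟪v, x⟫ - ⟪w, v⟫ : ℝ) : ℂ))
          = Complex.I * (⟪v, x⟫ : ℝ) + -(Complex.I * (⟪w, v⟫ : ℝ)) by push_cast; ring]
      rw [Complex.exp_add]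
      ring
    simp_rw [this]
    rw [integral_const_mul, e1]
  -- Fubini
  have cΦ : Continuous (Function.uncurry fun x v : V =>
      f (x + A v) * (Complex.exp (Complex.I * (⟪v, x⟫ : ℝ)) * G v)) := by
    have c1 : Continuous fun p : V × V => f (p.1 + A p.2) :=
      f.continuous.comp (continuous_fst.add (A.continuous.comp continuous_snd))
    have c2 : Continuous fun p : V × V => (⟪p.2, p.1⟫ : ℝ) :=
      continuous_inner.comp (continuous_snd.prodMk continuous_fst)
    have c3 : Continuous fun p : V × V => Complex.exp (Complex.I * (⟪p.2, p.1⟫ : ℝ)) :=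
      Complex.continuous_exp.comp (continuous_const.mul (Complex.continuous_ofReal.comp c2))
    exact c1.mul (c3.mul (hG_cont.comp continuous_snd))
  have hΦint : Integrable (Function.uncurry fun x v : V =>
      f (x + A v) * (Complex.exp (Complex.I * (⟪v, x⟫ : ℝ)) * G v))
      (volume.prod volume) := by
    rw [integrable_prod_iff' cΦ.aestronglyMeasurable]
    constructor
    · refine Filter.Eventually.of_forall fun v => ?_
      have hb : Integrable (fun x => f (x + A v)) := f.integrable.comp_add_right (A v)
      have hm : AEStronglyMeasurable
          (fun x : V => Complex.exp (Complex.I * (⟪v, x⟫ : ℝ)) * G v) volume := by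
        refine Continuous.aestronglyMeasurable ?_
        exact (Complex.continuous_exp.comp (continuous_const.mul
          (Complex.continuous_ofReal.comp (continuous_const.inner continuous_id)))).mul
          continuous_const
      have hbd : ∃ C, ∀ x : V, ‖Complex.exp (Complex.I * (⟪v, x⟫ : ℝ)) * G v‖ ≤ C := by
        refine ⟨‖G v‖, fun x => ?_⟩
        rw [norm_mul, norm_exp_I_mul, one_mul]
      obtain ⟨C, hC⟩ := hbd
      have := hb.bdd_mul hm (Filter.Eventually.of_forall hC)
      exact this.congr (Filter.Eventually.of_forall fun x => by
        simp only [Function.uncurry_apply_pair]; ring)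
    · have heq : (fun v : V => ∫ x : V, ‖Function.uncurry (fun x v : V =>
          f (x + A v) * (Complex.exp (Complex.I * (⟪v, x⟫ : ℝ)) * G v)) (x, v)‖)
          = fun v => (∫ x : V, ‖f x‖) * ‖G v‖ := by
        funext v
        simp only [Function.uncurry_apply_pair, norm_mul, norm_exp_I_mul, one_mul]
        rw [← integral_mul_const]
        rw [← integral_add_right_eq_self (fun x => ‖f x‖ * ‖G v‖) (A v)]
      rw [heq]
      exact (hG_int.norm.const_mul _)
  -- Step X
  have hX : ∀ v : V, (∫ x : V, f (x + A v) * (Complex.exp (Complex.I * (⟪v, x⟫ : ℝ)) * G v))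
      = 𝓕⁻ (⇑f) ((2 * π)⁻¹ • v) * G v := by
    intro v
    simp_rw [← mul_assoc]
    rw [integral_mul_const]
    congr 1
    have key : ∀ x : V, f (x + A v) * Complex.exp (Complex.I * (⟪v, x⟫ : ℝ))
        = (fun y => f y * Complex.exp (Complex.I * (⟪y, v⟫ : ℝ))) (x + A v) := by
      intro x
      have h0 : ⟪A v, v⟫ = (0:ℝ) := by rw [real_inner_comm]; exact hA v
      simp only []
      rw [inner_add_left, h0, add_zero, real_inner_comm x v]
    simp_rw [key]
    rw [integral_add_right_eq_self (fun y => f y * Complex.exp (Complex.I * (⟪y, v⟫ : ℝ)))]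
    exact e2 (⇑f) v
  -- assemble
  simp_rw [hW]
  rw [integral_smul]
  rw [integral_integral_swap hΦint]
  simp_rw [hX]
  have hcv : (∫ v : V, 𝓕⁻ (⇑f) ((2 * π)⁻¹ • v) * G v)
      = ((2 * π) ^ n : ℝ) • ∫ u : V, 𝓕⁻ (⇑f) u * 𝓕 (⇑g) u := by
    have := Measure.integral_comp_inv_smul_of_nonneg (volume : Measure V)
      (fun u : V => 𝓕⁻ (⇑f) u * 𝓕 (⇑g) u) twopi_pos.le
    simpa [hGdef] using this
  rw [hcv, smul_smul, inv_mul_cancel₀ (by positivity), one_smul]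
  exact stepZ f g

lemma integral_pi_eq {d : ℕ} (h : (Fin d → ℝ) → ℂ) :
    ∫ x : Fin d → ℝ, h x = ∫ x : EuclideanSpace ℝ (Fin d), h x :=
  ((EuclideanSpace.volume_preserving_symm_measurableEquiv_toLp (Fin d)).integral_comp
    (MeasurableEquiv.toLp 2 (Fin d → ℝ)).symm.measurableEmbedding h).symm

noncomputable def Amap {d : ℕ} (θ : Matrix (Fin d) (Fin d) ℝ) :
    EuclideanSpace ℝ (Fin d) →L[ℝ] EuclideanSpace ℝ (Fin d) := by
  exact (EuclideanSpace.equiv (Fin d) ℝ).symm.toContinuousLinearMap.comp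
    ((LinearMap.toContinuousLinearMap ((1/2 : ℝ) • θ.mulVecLin)).comp
      (EuclideanSpace.equiv (Fin d) ℝ).toContinuousLinearMap)

lemma Amap_inner {d : ℕ} (θ : Matrix (Fin d) (Fin d) ℝ) (hθ : θᵀ = -θ)
    (v : EuclideanSpace ℝ (Fin d)) : ⟪v, Amap θ v⟫ = 0 := by
  have h2 : v ⬝ᵥ θ.mulVec v = 0 := by
    have h3 : v ⬝ᵥ θ.mulVec v = vecMul v θ ⬝ᵥ v := dotProduct_mulVec v θ v
    have h4 : vecMul v θ = -(θ.mulVec v) := by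
      rw [← Matrix.mulVec_transpose, hθ, Matrix.neg_mulVec]
    rw [h4, neg_dotProduct, dotProduct_comm] at h3
    have h5 : θ.mulVec v ⬝ᵥ v = 0 := by linarith
    rw [dotProduct_comm]
    exact h5
  have h1 : ⟪v, Amap θ v⟫ = ∑ i, v i * ((1/2 : ℝ) * θ.mulVec v i) := by
    rw [PiLp.inner_apply]
    simp only [RCLike.inner_apply, conj_trivial]
    exact Finset.sum_congr rfl fun i _ => mul_comm _ _
  rw [h1]
  have : ∑ i, v i * ((1/2 : ℝ) * θ.mulVec v i) = (1/2) * (v ⬝ᵥ θ.mulVec v) := by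
    rw [dotProduct, Finset.mul_sum]
    congr 1; ext i; ring
  rw [this, h2, mul_zero]

end MoyalAux

open MoyalAux Real SchwartzMap RealInnerProductSpace in
/-- Tracial property of the Moyal product: ∫ (f ⋆_θ g) = ∫ f g. -/
theorem moyal_integral_eq {d : ℕ} (θ : Matrix (Fin d) (Fin d) ℝ)
    (hθ : θᵀ = -θ) (f g : SchwartzMap (Fin d → ℝ) ℂ) :
    ∫ x : Fin d → ℝ, moyalProd θ (fun y => f y) (fun y => g y) x
      = ∫ x : Fin d → ℝ, f x * g x := by
  let f' : SchwartzMap (EuclideanSpace ℝ (Fin d)) ℂ :=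
    SchwartzMap.compCLMOfContinuousLinearEquiv ℝ (EuclideanSpace.equiv (Fin d) ℝ) f
  let g' : SchwartzMap (EuclideanSpace ℝ (Fin d)) ℂ :=
    SchwartzMap.compCLMOfContinuousLinearEquiv ℝ (EuclideanSpace.equiv (Fin d) ℝ) g
  have hcore := core (Amap θ) (Amap_inner θ hθ) f' g'
  rw [finrank_euclideanSpace_fin] at hcore
  calc
    ∫ x : Fin d → ℝ, moyalProd θ (fun y => f y) (fun y => g y) x
        = ∫ x : EuclideanSpace ℝ (Fin d), moyalProd θ (fun y => f y) (fun y => g y) x :=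
          integral_pi_eq _
    _ = ∫ x : EuclideanSpace ℝ (Fin d), (((2 * π) ^ d : ℝ)⁻¹ •
          ∫ v : EuclideanSpace ℝ (Fin d), ∫ w : EuclideanSpace ℝ (Fin d),
            f' (x + Amap θ v) * g' (x - w) * Complex.exp (Complex.I * (⟪v, w⟫ : ℝ))) := by
        congr 1
        funext x
        simp only [moyalProd]
        congr 1
        refine Eq.trans (integral_pi_eq _) ?_
        congr 1
        funext v
        refine Eq.trans (integral_pi_eq _) ?_
        congr 1
        funext w
        simp only [PiLp.inner_apply, RCLike.inner_apply, conj_trivial, mul_comm (w.ofLp _)]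
        rfl
    _ = ∫ x : EuclideanSpace ℝ (Fin d), f' x * g' x := hcore
    _ = ∫ x : Fin d → ℝ, f x * g x := (integral_pi_eq (fun x => f x * g x)).symm
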